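/- Let G ∼ N(0, Iₙ) and let X be a random vector in ℝⁿ with X ≼_cx G. Then X is the weak limit of a sequence of finitely supported random vectors X_k in ℝⁿ satisfying X_k ≼_cx G for every k. -/

import Mathlib

open MeasureTheory Real Filter
open scoped ENNReal

/-- The standard Gaussian measure `N(0, Iₙ)` on `ℝⁿ`. -/
noncomputable def stdGaussian (n : ℕ) : Measure (EuclideanSpace ℝ (Fin n)) :=
  (MeasureTheory.Measure.pi fun _ : Fin n => ProbabilityTheory.gaussianReal 0 1).map
    (WithLp.toLp 2)

/-- Convex order for (finite-first-moment) measures on `ℝⁿ`: for every convex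
`f : ℝⁿ → ℝ` whose expectation under `ν` is finite, the expectation under `μ` is finite
and `∫ f dμ ≤ ∫ f dν`. -/
def ConvexOrder {n : ℕ} (μ ν : Measure (EuclideanSpace ℝ (Fin n))) : Prop :=
  ∀ f : EuclideanSpace ℝ (Fin n) → ℝ, ConvexOn ℝ Set.univ f → Integrable f ν →
    Integrable f μ ∧ ∫ x, f x ∂μ ≤ ∫ x, f x ∂ν

noncomputable section CXAux

variable {n : ℕ}

/-- Labelling of the dyadic (truncated) cell containing `x`. -/
def cxLab (n k : ℕ) (x : EuclideanSpace ℝ (Fin n)) : Fin n → ℤ :=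
  fun i => max (-(k * 2 ^ k : ℤ)) (min ((k * 2 ^ k : ℤ)) ⌊(2 ^ k : ℝ) * x i⌋)

lemma measurable_cxLab (n k : ℕ) : Measurable (cxLab n k) := by
  apply measurable_pi_lambda
  intro i
  have h1 : Measurable fun x : EuclideanSpace ℝ (Fin n) => ⌊(2 ^ k : ℝ) * x i⌋ :=
    Measurable.floor (f := fun x : EuclideanSpace ℝ (Fin n) => (2 ^ k : ℝ) * x i)
      (measurable_const.mul ((measurable_pi_apply i).comp (WithLp.measurable_ofLp 2 (Fin n → ℝ))))
  exact (measurable_from_top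
    (f := fun z : ℤ => max (-(k * 2 ^ k : ℤ)) (min ((k * 2 ^ k : ℤ)) z))).comp h1

/-- The dyadic cell with label `m`. -/
def cxCell (n k : ℕ) (m : Fin n → ℤ) : Set (EuclideanSpace ℝ (Fin n)) := cxLab n k ⁻¹' {m}

lemma measurableSet_cxCell (n k : ℕ) (m : Fin n → ℤ) : MeasurableSet (cxCell n k m) :=
  measurable_cxLab n k (measurableSet_singleton m)

/-- Barycenter of `ρ` on the cell `m` (the cell's corner if the cell is `ρ`-null). -/
def cxBary (n k : ℕ) (ρ : Measure (EuclideanSpace ℝ (Fin n))) (m : Fin n → ℤ) :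
    EuclideanSpace ℝ (Fin n) :=
  if ρ (cxCell n k m) = 0 then (WithLp.equiv 2 (Fin n → ℝ)).symm (fun i => (m i : ℝ) / 2 ^ k)
  else ⨍ x in cxCell n k m, x ∂ρ

/-- The discretization map sending each point to the barycenter of its cell. -/
def cxG (n k : ℕ) (ρ : Measure (EuclideanSpace ℝ (Fin n))) :
    EuclideanSpace ℝ (Fin n) → EuclideanSpace ℝ (Fin n) :=
  fun x => cxBary n k ρ (cxLab n k x)

lemma measurable_cxG (n k : ℕ) (ρ : Measure (EuclideanSpace ℝ (Fin n))) :
    Measurable (cxG n k ρ) :=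
  (measurable_of_countable (cxBary n k ρ)).comp (measurable_cxLab n k)

/-- The finite set of possible labels. -/
def cxBox (n k : ℕ) : Finset (Fin n → ℤ) :=
  Fintype.piFinset fun _ => Finset.Icc (-(k * 2 ^ k : ℤ)) (k * 2 ^ k)

lemma cxLab_mem_box (n k : ℕ) (x : EuclideanSpace ℝ (Fin n)) : cxLab n k x ∈ cxBox n k := by
  simp only [cxBox, Fintype.mem_piFinset, Finset.mem_Icc]
  intro i
  refine ⟨le_max_left _ _, max_le (neg_le_self (by positivity)) (min_le_left _ _)⟩

lemma mem_cxCell_self (n k : ℕ) (x : EuclideanSpace ℝ (Fin n)) :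
    x ∈ cxCell n k (cxLab n k x) := rfl

lemma iUnion_cxCell (n k : ℕ) : (⋃ m ∈ cxBox n k, cxCell n k m) = Set.univ := by
  ext x
  simp only [Set.mem_iUnion, Set.mem_univ, iff_true]
  exact ⟨cxLab n k x, cxLab_mem_box n k x, mem_cxCell_self n k x⟩

lemma finite_range_cxG (n k : ℕ) (ρ : Measure (EuclideanSpace ℝ (Fin n))) :
    (Set.range (cxG n k ρ)).Finite := by
  refine (((cxBox n k).finite_toSet).image (cxBary n k ρ)).subset ?_
  rintro _ ⟨x, rfl⟩
  exact ⟨cxLab n k x, cxLab_mem_box n k x, rfl⟩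

lemma integral_eq_sum_cxCell {E' : Type*} [NormedAddCommGroup E'] [NormedSpace ℝ E']
    (ρ : Measure (EuclideanSpace ℝ (Fin n))) (k : ℕ) {h : EuclideanSpace ℝ (Fin n) → E'}
    (hh : Integrable h ρ) :
    ∫ x, h x ∂ρ = ∑ m ∈ cxBox n k, ∫ x in cxCell n k m, h x ∂ρ := by
  rw [← setIntegral_univ, ← iUnion_cxCell n k]
  exact integral_biUnion_finset _ (fun m _ => measurableSet_cxCell n k m)
    (fun a _ b _ hab => Set.disjoint_left.2 fun x hxa hxb => hab (hxa.symm.trans hxb))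
    (fun m _ => hh.integrableOn)

/-- Jensen's inequality on a single cell. -/
lemma cxCell_smul_le (ρ : Measure (EuclideanSpace ℝ (Fin n))) [IsProbabilityMeasure ρ]
    (hid : Integrable (fun x => x) ρ) {f : EuclideanSpace ℝ (Fin n) → ℝ}
    (hf : ConvexOn ℝ Set.univ f) (hfc : Continuous f) (hfi : Integrable f ρ) (k : ℕ)
    (m : Fin n → ℤ) :
    (ρ (cxCell n k m)).toReal * f (cxBary n k ρ m) ≤ ∫ x in cxCell n k m, f x ∂ρ := by
  by_cases h0 : ρ (cxCell n k m) = 0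
  · rw [h0, Measure.restrict_eq_zero.mpr h0, integral_zero_measure]
    simp
  · haveI : NeZero (ρ.restrict (cxCell n k m)) := ⟨by
      rw [Ne, Measure.restrict_eq_zero]; exact h0⟩
    have hbary : cxBary n k ρ m = ⨍ x in cxCell n k m, x ∂ρ := if_neg h0
    have hJ : f (⨍ x in cxCell n k m, x ∂ρ) ≤ ⨍ x in cxCell n k m, f x ∂ρ :=
      hf.map_average_le (μ := ρ.restrict (cxCell n k m)) (f := fun x => x)
        (hfc.continuousOn) isClosed_univ
        (Filter.Eventually.of_forall fun x => Set.mem_univ x) hid.restrict hfi.restrict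
    rw [hbary]
    have ha : 0 < (ρ (cxCell n k m)).toReal :=
      ENNReal.toReal_pos h0 (measure_ne_top ρ _)
    refine le_trans (mul_le_mul_of_nonneg_left hJ ha.le) ?_
    rw [setAverage_eq, smul_eq_mul, measureReal_def, mul_inv_cancel_left₀ ha.ne']

lemma cxCell_subset (n k : ℕ) {m : Fin n → ℤ}
    (hm : ∀ i, -(k * 2 ^ k : ℤ) < m i ∧ m i < k * 2 ^ k) :
    cxCell n k m ⊆ {y : EuclideanSpace ℝ (Fin n) |
      ∀ i, y i ∈ Set.Icc ((m i : ℝ) / 2 ^ k) ((m i + 1 : ℝ) / 2 ^ k)} := by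
  intro y hy i
  have hy' : cxLab n k y = m := hy
  have h := congrFun hy' i
  have hmi : ⌊(2 ^ k : ℝ) * y i⌋ = m i := by
    simp only [cxLab] at h
    rcases hm i with ⟨h1, h2⟩
    omega
  have h1 : (m i : ℝ) ≤ 2 ^ k * y i := by rw [← hmi]; exact Int.floor_le _
  have h2 : 2 ^ k * y i < (m i : ℝ) + 1 := by
    rw [← hmi]; exact Int.lt_floor_add_one _
  have h2k : (0:ℝ) < 2 ^ k := by positivity
  constructor
  · rw [div_le_iff₀ h2k]
    nlinarith
  · rw [le_div_iff₀ h2k]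
    nlinarith

lemma cxBary_mem (ρ : Measure (EuclideanSpace ℝ (Fin n))) [IsProbabilityMeasure ρ]
    (hid : Integrable (fun x : EuclideanSpace ℝ (Fin n) => x) ρ) {k : ℕ} {m : Fin n → ℤ}
    (hm : ∀ i, -(k * 2 ^ k : ℤ) < m i ∧ m i < k * 2 ^ k) (i : Fin n) :
    cxBary n k ρ m i ∈ Set.Icc ((m i : ℝ) / 2 ^ k) ((m i + 1 : ℝ) / 2 ^ k) := by
  set B : Set (EuclideanSpace ℝ (Fin n)) :=
    {y | ∀ j, y j ∈ Set.Icc ((m j : ℝ) / 2 ^ k) ((m j + 1 : ℝ) / 2 ^ k)} with hBdef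
  have hBconv : Convex ℝ B := by
    intro x hx y hy a b ha hb hab j
    have : (a • x + b • y) j = a * x j + b * y j := rfl
    rw [this]
    exact (convex_Icc _ _) (hx j) (hy j) ha hb hab
  have hBclosed : IsClosed B := by
    have : B = ⋂ j, (fun y : EuclideanSpace ℝ (Fin n) => y j) ⁻¹'
        Set.Icc ((m j : ℝ) / 2 ^ k) ((m j + 1 : ℝ) / 2 ^ k) := by
      ext y; simp [hBdef, Set.mem_iInter]
    rw [this]
    exact isClosed_iInter fun j =>
      isClosed_Icc.preimage (EuclideanSpace.proj (𝕜 := ℝ) j).continuous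
  have key : cxBary n k ρ m ∈ B := by
    rw [cxBary]
    split_ifs with h0
    · intro j
      have : ((WithLp.equiv 2 (Fin n → ℝ)).symm (fun i => (m i : ℝ) / 2 ^ k)) j
          = (m j : ℝ) / 2 ^ k := rfl
      rw [this]
      refine ⟨le_rfl, ?_⟩
      gcongr
      linarith
    · refine hBconv.set_average_mem hBclosed h0 (measure_ne_top ρ _) ?_ hid.restrict
      exact ae_restrict_of_forall_mem (measurableSet_cxCell n k m)
        fun x hx => cxCell_subset n k hm hx
  exact key i

lemma dist_cxG_le (ρ : Measure (EuclideanSpace ℝ (Fin n))) [IsProbabilityMeasure ρ]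
    (hid : Integrable (fun x : EuclideanSpace ℝ (Fin n) => x) ρ) (k : ℕ)
    (x : EuclideanSpace ℝ (Fin n)) (hx : ∀ i, |x i| ≤ (k : ℝ) - 1) :
    dist (cxG n k ρ x) x ≤ Real.sqrt n * (2 ^ k)⁻¹ := by
  set m := cxLab n k x with hmdef
  have h2k : (1:ℝ) ≤ 2 ^ k := one_le_pow₀ one_le_two
  have h2k0 : (0:ℝ) < 2 ^ k := by positivity
  have hfloor : ∀ i, ⌊(2 ^ k : ℝ) * x i⌋ = m i ∧
      -(k * 2 ^ k : ℤ) < m i ∧ m i < k * 2 ^ k := by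
    intro i
    have habs := abs_le.mp (hx i)
    have h1 : ((-(k * 2 ^ k : ℤ) + 1 : ℤ) : ℝ) ≤ 2 ^ k * x i := by
      push_cast
      nlinarith [habs.1]
    have h1' : -(k * 2 ^ k : ℤ) + 1 ≤ ⌊(2 ^ k : ℝ) * x i⌋ := Int.le_floor.mpr h1
    have h2 : (2 ^ k : ℝ) * x i < ((k * 2 ^ k : ℤ) : ℝ) := by
      push_cast
      nlinarith [habs.2]
    have h2' : ⌊(2 ^ k : ℝ) * x i⌋ < (k * 2 ^ k : ℤ) := Int.floor_lt.mpr h2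
    have hmi : m i = max (-(k * 2 ^ k : ℤ)) (min ((k * 2 ^ k : ℤ)) ⌊(2 ^ k : ℝ) * x i⌋) := rfl
    omega
  have hm : ∀ i, -(k * 2 ^ k : ℤ) < m i ∧ m i < k * 2 ^ k := fun i =>
    ⟨(hfloor i).2.1, (hfloor i).2.2⟩
  have hxmem : ∀ i, x i ∈ Set.Icc ((m i : ℝ) / 2 ^ k) ((m i + 1 : ℝ) / 2 ^ k) := by
    intro i
    have h1 : (m i : ℝ) ≤ 2 ^ k * x i := by
      rw [← (hfloor i).1]; exact Int.floor_le _
    have h2 : 2 ^ k * x i < (m i : ℝ) + 1 := by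
      rw [← (hfloor i).1]; exact Int.lt_floor_add_one _
    constructor
    · rw [div_le_iff₀ h2k0]; nlinarith
    · rw [le_div_iff₀ h2k0]; nlinarith
  have hbmem := cxBary_mem ρ hid hm
  have hcoord : ∀ i, dist (cxG n k ρ x i) (x i) ≤ (2 ^ k : ℝ)⁻¹ := by
    intro i
    have h := Real.dist_le_of_mem_Icc (hbmem i) (hxmem i)
    have : (m i + 1 : ℝ) / 2 ^ k - (m i : ℝ) / 2 ^ k = (2 ^ k : ℝ)⁻¹ := by
      field_simp
      ring
    rw [this] at h
    exact h
  rw [EuclideanSpace.dist_eq]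
  have hsum : ∑ i, dist (cxG n k ρ x i) (x i) ^ 2 ≤ (n : ℝ) * ((2 ^ k : ℝ)⁻¹) ^ 2 := by
    calc ∑ i, dist (cxG n k ρ x i) (x i) ^ 2
        ≤ ∑ _i : Fin n, ((2 ^ k : ℝ)⁻¹) ^ 2 :=
          Finset.sum_le_sum fun i _ => pow_le_pow_left₀ dist_nonneg (hcoord i) 2
      _ = (n : ℝ) * ((2 ^ k : ℝ)⁻¹) ^ 2 := by
          simp [Finset.sum_const, nsmul_eq_mul]
  calc Real.sqrt (∑ i, dist (cxG n k ρ x i) (x i) ^ 2)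
      ≤ Real.sqrt ((n : ℝ) * ((2 ^ k : ℝ)⁻¹) ^ 2) := Real.sqrt_le_sqrt hsum
    _ = Real.sqrt n * (2 ^ k : ℝ)⁻¹ := by
        rw [Real.sqrt_mul (Nat.cast_nonneg n), Real.sqrt_sq (by positivity)]

lemma tendsto_cxG (ρ : Measure (EuclideanSpace ℝ (Fin n))) [IsProbabilityMeasure ρ]
    (hid : Integrable (fun x : EuclideanSpace ℝ (Fin n) => x) ρ)
    (x : EuclideanSpace ℝ (Fin n)) :
    Tendsto (fun k => cxG n k ρ x) atTop (nhds x) := by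
  rw [tendsto_iff_dist_tendsto_zero]
  have hcoord : ∀ i, |x i| ≤ ‖x‖ := by
    intro i
    rw [EuclideanSpace.norm_eq]
    have h1 : |x i| = Real.sqrt (‖x i‖ ^ 2) := by
      rw [Real.sqrt_sq_eq_abs, abs_norm, Real.norm_eq_abs]
    rw [h1]
    apply Real.sqrt_le_sqrt
    exact Finset.single_le_sum (f := fun j => ‖x j‖ ^ 2)
      (fun j _ => sq_nonneg _) (Finset.mem_univ i)
  apply squeeze_zero' (Filter.Eventually.of_forall fun k => dist_nonneg)
  · filter_upwards [eventually_ge_atTop (⌈‖x‖⌉₊ + 1)] with k hk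
    refine dist_cxG_le ρ hid k x fun i => ?_
    have h1 : (⌈‖x‖⌉₊ : ℝ) + 1 ≤ (k : ℝ) := by exact_mod_cast hk
    have h2 : ‖x‖ ≤ (⌈‖x‖⌉₊ : ℝ) := Nat.le_ceil _
    linarith [hcoord i]
  · have h1 : Tendsto (fun k : ℕ => ((2 : ℝ) ^ k)⁻¹) atTop (nhds 0) :=
      tendsto_inv_atTop_zero.comp (tendsto_pow_atTop_atTop_of_one_lt one_lt_two)
    have := h1.const_mul (Real.sqrt n)
    simpa using this

end CXAux

/-- Any random vector `X` with `X ≼_cx G`, `G ∼ N(0, Iₙ)`, is the weak limit of finitely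
supported random vectors `X_k` with `X_k ≼_cx G`. -/
theorem statement_10 (n : ℕ) (Ω : Type) (_ : MeasurableSpace Ω) (P : Measure Ω)
    (hP : IsProbabilityMeasure P) (X : Ω → EuclideanSpace ℝ (Fin n))
    (hX : Measurable X) (hint : Integrable X P)
    (hdom : ConvexOrder (Measure.map X P) (stdGaussian n)) :
    ∃ μ : ℕ → Measure (EuclideanSpace ℝ (Fin n)),
      (∀ k, IsProbabilityMeasure (μ k)) ∧
      (∀ k, ∃ S : Finset (EuclideanSpace ℝ (Fin n)), μ k ((↑S : Set _)ᶜ) = 0) ∧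
      (∀ k, ConvexOrder (μ k) (stdGaussian n)) ∧
      (∀ f : BoundedContinuousFunction (EuclideanSpace ℝ (Fin n)) ℝ,
        Tendsto (fun k => ∫ x, f x ∂(μ k)) atTop (nhds (∫ x, f x ∂(Measure.map X P)))) := by
  set ρ : Measure (EuclideanSpace ℝ (Fin n)) := Measure.map X P with hρdef
  haveI hρP : IsProbabilityMeasure ρ := Measure.isProbabilityMeasure_map hX.aemeasurable
  have hid : Integrable (fun x : EuclideanSpace ℝ (Fin n) => x) ρ :=
    (integrable_map_measure aestronglyMeasurable_id hX.aemeasurable).2 hint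
  refine ⟨fun k => Measure.map (cxG n k ρ) ρ, ?_, ?_, ?_, ?_⟩
  · exact fun k => Measure.isProbabilityMeasure_map (measurable_cxG n k ρ).aemeasurable
  · intro k
    refine ⟨(finite_range_cxG n k ρ).toFinset, ?_⟩
    rw [Measure.map_apply (measurable_cxG n k ρ)
      ((finite_range_cxG n k ρ).toFinset.finite_toSet.measurableSet.compl)]
    have : cxG n k ρ ⁻¹' ((↑(finite_range_cxG n k ρ).toFinset : Set _)ᶜ) = ∅ := by
      ext x
      simp only [Set.mem_preimage, Set.mem_compl_iff, Finset.coe_sort_coe, Finset.mem_coe,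
        Set.Finite.mem_toFinset, Set.mem_empty_iff_false, iff_false, not_not]
      exact ⟨x, rfl⟩
    rw [this, measure_empty]
  · intro k f hf hfG
    obtain ⟨hfρ, hle⟩ := hdom f hf hfG
    have hfc : Continuous f := by
      rw [← continuousOn_univ]
      exact hf.continuousOn isOpen_univ
    -- integrability of `f ∘ cxG`
    have hbd : ∃ C, ∀ x, ‖f (cxG n k ρ x)‖ ≤ C := by
      have hfin : ((fun y => ‖f y‖) '' Set.range (cxG n k ρ)).Finite :=
        (finite_range_cxG n k ρ).image _
      obtain ⟨C, hC⟩ := hfin.bddAbove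
      exact ⟨C, fun x => hC ⟨cxG n k ρ x, ⟨x, rfl⟩, rfl⟩⟩
    obtain ⟨C, hC⟩ := hbd
    have hcomp : Integrable (fun x => f (cxG n k ρ x)) ρ :=
      ⟨(hfc.measurable.comp (measurable_cxG n k ρ)).aestronglyMeasurable,
        HasFiniteIntegral.of_bounded (Filter.Eventually.of_forall hC)⟩
    have hmapint : Integrable f (Measure.map (cxG n k ρ) ρ) :=
      (integrable_map_measure hfc.aestronglyMeasurable
        (measurable_cxG n k ρ).aemeasurable).2 hcomp
    refine ⟨hmapint, le_trans ?_ hle⟩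
    have key : ∫ x, f x ∂(Measure.map (cxG n k ρ) ρ)
        = ∑ m ∈ cxBox n k, (ρ (cxCell n k m)).toReal * f (cxBary n k ρ m) := by
      rw [integral_map (measurable_cxG n k ρ).aemeasurable hfc.aestronglyMeasurable,
        integral_eq_sum_cxCell ρ k hcomp]
      refine Finset.sum_congr rfl fun m _ => ?_
      have heq : Set.EqOn (fun x => f (cxG n k ρ x)) (fun _ => f (cxBary n k ρ m))
          (cxCell n k m) := by
        intro x hx
        have : cxLab n k x = m := hx
        simp only [cxG, this]
      rw [setIntegral_congr_fun (measurableSet_cxCell n k m) heq, setIntegral_const,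
        smul_eq_mul, measureReal_def]
    rw [key, integral_eq_sum_cxCell ρ k hfρ]
    exact Finset.sum_le_sum fun m _ => cxCell_smul_le ρ hid hf hfc hfρ k m
  · intro f
    have heq : ∀ k, ∫ x, f x ∂(Measure.map (cxG n k ρ) ρ) = ∫ x, f (cxG n k ρ x) ∂ρ :=
      fun k => integral_map (measurable_cxG n k ρ).aemeasurable
        f.continuous.aestronglyMeasurable
    simp only [heq]
    exact tendsto_integral_of_dominated_convergence (fun _ => ‖f‖)
      (fun k => (f.continuous.measurable.comp (measurable_cxG n k ρ)).aestronglyMeasurable)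
      (integrable_const _)
      (fun k => Filter.Eventually.of_forall fun x => f.norm_coe_le_norm _)
      (Filter.Eventually.of_forall fun x =>
        (f.continuous.tendsto x).comp (tendsto_cxG ρ hid x))
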